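/- arXiv:1604.05396 — 4 statements merged into one kernel-verified Lean document; each statement's English description precedes it below -/
import Mathlib

section
/- Fix real numbers β > 0 and γ > 0, and define the sequence a_m = (β/(16γ))·γ^m/m² for m ≥ 1. Then for every m ≥ 2, the Cauchy product coefficient satisfies Σ_{j=1}^{m−1} a_j · a_{m−j} ≤ (β/γ)·a_m. In other words, the formal power series A(t) = Σ_{m≥1} a_m t^m satisfies A(t)² ≪ (β/γ)·A(t), where ≪ denotes coefficientwise inequality. -/
lemma kodaira_sum_inv_sq_le_two : ∀ n : ℕ, 1 ≤ n →
    ∑ j ∈ Finset.Icc 1 n, (1:ℝ)/(j:ℝ)^2 ≤ 2 - 1/(n:ℝ) := by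
  intro n hn
  induction n with
  | zero => omega
  | succ n ih =>
    rcases Nat.lt_or_ge 1 (n+1) with h | h
    · have hn1 : 1 ≤ n := by omega
      have hnr : (0:ℝ) < n := by exact_mod_cast hn1
      have hnr1 : (0:ℝ) < (n:ℝ) + 1 := by linarith
      rw [Finset.sum_Icc_succ_top (by omega)]
      have h1 : (1:ℝ)/(((n:ℝ))+1)^2 ≤ 1/(n:ℝ) - 1/((n:ℝ)+1) := by
        rw [div_sub_div _ _ (ne_of_gt hnr) (ne_of_gt hnr1)]
        rw [div_le_div_iff₀ (by positivity) (by positivity)]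
        nlinarith
      have h2 := ih hn1
      push_cast
      linarith
    · have : n = 0 := by omega
      subst this
      norm_num
/-- The coefficients `a_m = (β/(16γ))·γ^m/m²` satisfy the Cauchy-product domination
`Σ_{j=1}^{m−1} a_j a_{m−j} ≤ (β/γ)·a_m` for every `m ≥ 2`. -/
theorem kodaira_series_domination (β γ : ℝ) (hβ : 0 < β) (hγ : 0 < γ)
    (a : ℕ → ℝ) (ha : ∀ m : ℕ, a m = β / (16 * γ) * γ ^ m / (m : ℝ) ^ 2) :
    ∀ m : ℕ, 2 ≤ m → ∑ j ∈ Finset.Ico 1 m, a j * a (m - j) ≤ (β / γ) * a m := by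
  intro m hm
  have hmr : (2:ℝ) ≤ (m:ℝ) := by exact_mod_cast hm
  have hmpos : (0:ℝ) < m := by linarith
  set C := β / (16 * γ) with hC
  have hCpos : 0 < C := by positivity
  -- key combinatorial bound
  have key : ∑ j ∈ Finset.Ico 1 m, (1:ℝ)/((j:ℝ)^2 * (((m-j:ℕ)):ℝ)^2) ≤ 16/(m:ℝ)^2 := by
    have hbound : ∀ j ∈ Finset.Ico 1 m,
        (1:ℝ)/((j:ℝ)^2 * (((m-j:ℕ)):ℝ)^2)
          ≤ 2/(m:ℝ)^2 * (1/(j:ℝ)^2 + 1/(((m-j:ℕ)):ℝ)^2) := by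
      intro j hj
      simp only [Finset.mem_Ico] at hj
      have hx : (1:ℝ) ≤ (j:ℝ) := by exact_mod_cast hj.1
      have hy : (1:ℝ) ≤ (((m-j:ℕ)):ℝ) := by
        have : 1 ≤ m - j := by omega
        exact_mod_cast this
      have hxy : (j:ℝ) + (((m-j:ℕ)):ℝ) = (m:ℝ) := by
        have : j + (m - j) = m := by omega
        exact_mod_cast this
      set x := (j:ℝ)
      set y := (((m-j:ℕ)):ℝ)
      have hx0 : (0:ℝ) < x := by linarith
      have hy0 : (0:ℝ) < y := by linarith
      have hdiff : 2/(m:ℝ)^2 * (1/x^2 + 1/y^2) - 1/(x^2 * y^2)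
          = (x - y)^2 / ((x+y)^2 * x^2 * y^2) := by
        rw [← hxy]
        field_simp
        ring
      have hpos : (0:ℝ) ≤ (x - y)^2 / ((x+y)^2 * x^2 * y^2) := by positivity
      linarith
    have step1 := Finset.sum_le_sum hbound
    have hsum1 : ∑ j ∈ Finset.Ico 1 m, (1:ℝ)/(j:ℝ)^2 ≤ 2 := by
      rw [show m = m - 1 + 1 by omega, Finset.Ico_add_one_right_eq_Icc]
      have h2 := kodaira_sum_inv_sq_le_two (m-1) (by omega)
      have : (0:ℝ) < ((m-1:ℕ):ℝ) := by
        have : 1 ≤ m - 1 := by omega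
        exact_mod_cast Nat.lt_of_lt_of_le Nat.zero_lt_one this
      have h3 : (0:ℝ) ≤ 1/((m-1:ℕ):ℝ) := by positivity
      linarith
    have hsum2 : ∑ j ∈ Finset.Ico 1 m, (1:ℝ)/(((m-j:ℕ)):ℝ)^2 ≤ 2 := by
      have heq : ∑ j ∈ Finset.Ico 1 m, (1:ℝ)/(((m-j:ℕ)):ℝ)^2
          = ∑ j ∈ Finset.Ico 1 m, (1:ℝ)/(j:ℝ)^2 := by
        apply Finset.sum_nbij' (fun j => m - j) (fun j => m - j)
        · intro j hj; simp only [Finset.mem_Ico] at *; omega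
        · intro j hj; simp only [Finset.mem_Ico] at *; omega
        · intro j hj; simp only [Finset.mem_Ico] at hj; omega
        · intro j hj; simp only [Finset.mem_Ico] at hj; omega
        · intro j hj; simp only [Finset.mem_Ico] at hj
          congr 2
      rw [heq]; exact hsum1
    calc ∑ j ∈ Finset.Ico 1 m, (1:ℝ)/((j:ℝ)^2 * (((m-j:ℕ)):ℝ)^2)
        ≤ ∑ j ∈ Finset.Ico 1 m, 2/(m:ℝ)^2 * (1/(j:ℝ)^2 + 1/(((m-j:ℕ)):ℝ)^2) := step1
      _ = 2/(m:ℝ)^2 * ((∑ j ∈ Finset.Ico 1 m, (1:ℝ)/(j:ℝ)^2)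
            + ∑ j ∈ Finset.Ico 1 m, (1:ℝ)/(((m-j:ℕ)):ℝ)^2) := by
          rw [← Finset.mul_sum, Finset.sum_add_distrib]
      _ ≤ 2/(m:ℝ)^2 * (2 + 2) := by
          apply mul_le_mul_of_nonneg_left (by linarith) (by positivity)
      _ ≤ 16/(m:ℝ)^2 := by
          rw [show (2:ℝ)/(m:ℝ)^2*(2+2) = 8/(m:ℝ)^2 from by ring]
          gcongr <;> norm_num
  -- rewrite the LHS
  have hterm : ∀ j ∈ Finset.Ico 1 m,
      a j * a (m - j) = C^2 * γ^m * ((1:ℝ)/((j:ℝ)^2 * (((m-j:ℕ)):ℝ)^2)) := by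
    intro j hj
    simp only [Finset.mem_Ico] at hj
    have hjr : (0:ℝ) < (j:ℝ) := by exact_mod_cast hj.1
    have hmj : 1 ≤ m - j := by omega
    have hmjr : (0:ℝ) < (((m-j:ℕ)):ℝ) := by exact_mod_cast hmj
    have hpow : γ^j * γ^(m-j) = γ^m := by
      rw [← pow_add]
      congr 1
      omega
    rw [ha j, ha (m-j)]
    field_simp
    nlinarith [hpow]
  rw [Finset.sum_congr rfl hterm, ← Finset.mul_sum]
  have hRHS : (β / γ) * a m = C^2 * γ^m * (16/(m:ℝ)^2) := by
    rw [ha m, hC]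
    field_simp
  rw [hRHS]
  apply mul_le_mul_of_nonneg_left key (by positivity)
end

section
/- Let V be a real inner product space, let G ⊆ V be a cone (i.e., closed under multiplication by positive scalars), and let v ∈ G be a nonzero vector such that the open ball of radius ε > 0 centered at v is contained in G, where ε ≤ ‖v‖. Then the open circular cone C(v, arcsin(ε/‖v‖)) = { w ∈ V \ {0} : ⟨w, v⟩ / (‖w‖·‖v‖) > cos(arcsin(ε/‖v‖)) } is contained in G. -/
open Real

/-- If a cone `G` contains the open ball of radius `ε` around a nonzero `v ∈ G`
(with `ε ≤ ‖v‖`), then `G` contains the open circular cone `C(v, arcsin(ε/‖v‖))`. -/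
theorem circularCone_subset_cone {V : Type*} [NormedAddCommGroup V]
    [InnerProductSpace ℝ V] (G : Set V)
    (hcone : ∀ t : ℝ, 0 < t → ∀ w ∈ G, t • w ∈ G)
    (v : V) (hv : v ∈ G) (hv0 : v ≠ 0) (ε : ℝ) (hε : 0 < ε) (hεv : ε ≤ ‖v‖)
    (hball : Metric.ball v ε ⊆ G) :
    ∀ w : V, w ≠ 0 →
      (inner ℝ w v : ℝ) / (‖w‖ * ‖v‖) > Real.cos (Real.arcsin (ε / ‖v‖)) → w ∈ G := by
  intro w hw0 hang
  have hwn : (0:ℝ) < ‖w‖ := norm_pos_iff.mpr hw0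
  have hvn : (0:ℝ) < ‖v‖ := norm_pos_iff.mpr hv0
  rw [Real.cos_arcsin] at hang
  set c : ℝ := inner ℝ w v with hc
  have hsqrt_nonneg : (0:ℝ) ≤ Real.sqrt (1 - (ε / ‖v‖)^2) := Real.sqrt_nonneg _
  have hcpos : 0 < c := by
    have h : 0 < c / (‖w‖ * ‖v‖) := lt_of_le_of_lt hsqrt_nonneg hang
    have h2 := mul_pos h (show (0:ℝ) < ‖w‖ * ‖v‖ by positivity)
    rwa [div_mul_cancel₀ _ (by positivity : ‖w‖ * ‖v‖ ≠ 0)] at h2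
  -- key inequality after squaring
  have harg : (0:ℝ) ≤ 1 - (ε / ‖v‖)^2 := by
    have : (ε/‖v‖) ≤ 1 := (div_le_one hvn).mpr hεv
    nlinarith [div_pos hε hvn]
  have hsq : 1 - (ε / ‖v‖)^2 < (c / (‖w‖ * ‖v‖))^2 := by
    have := Real.sq_sqrt harg
    nlinarith [mul_self_nonneg (Real.sqrt (1 - (ε/‖v‖)^2) - c / (‖w‖ * ‖v‖))]
  have hkey : ‖v‖^2 - c^2 / ‖w‖^2 < ε^2 := by
    have h := mul_lt_mul_of_pos_right hsq (show (0:ℝ) < ‖v‖^2 by positivity)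
    have e1 : (1 - (ε / ‖v‖)^2) * ‖v‖^2 = ‖v‖^2 - ε^2 := by field_simp
    have e2 : (c / (‖w‖ * ‖v‖))^2 * ‖v‖^2 = c^2 / ‖w‖^2 := by field_simp
    rw [e1, e2] at h
    linarith
  set t : ℝ := c / ‖w‖^2 with ht
  have htpos : 0 < t := div_pos hcpos (by positivity)
  have hmem : t • w ∈ Metric.ball v ε := by
    rw [Metric.mem_ball, dist_eq_norm]
    have hnorm : ‖t • w - v‖^2 = ‖v‖^2 - c^2/‖w‖^2 := by
      rw [norm_sub_sq_real, norm_smul, real_inner_smul_left, ← hc,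
        Real.norm_eq_abs, abs_of_pos htpos, ht]
      field_simp
      ring
    have hlt : ‖t • w - v‖^2 < ε^2 := by rw [hnorm]; exact hkey
    nlinarith [norm_nonneg (t • w - v)]
  have := hcone t⁻¹ (inv_pos.mpr htpos) _ (hball hmem)
  rwa [inv_smul_smul₀ (ne_of_gt htpos)] at this
end

section
/- Let V be a real normed vector space of dimension at least 2 and let G ⊆ V be a nonempty open convex subset such that the closure of G is contained in G ∪ {0}. Then G = V. -/
/-- In a real normed space of dimension at least 2, a nonempty open convex set whose
closure is contained in `G ∪ {0}` must be the whole space. -/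
theorem open_convex_closure_subset_insert_zero {V : Type*} [NormedAddCommGroup V]
    [NormedSpace ℝ V] (hdim : 2 ≤ Module.rank ℝ V) (G : Set V)
    (hne : G.Nonempty) (hopen : IsOpen G) (hconv : Convex ℝ G)
    (hcl : closure G ⊆ G ∪ {0}) :
    G = Set.univ := by
  have h1 : (1 : Cardinal) < Module.rank ℝ V := lt_of_lt_of_le (by norm_num) hdim
  have hconn : IsPreconnected ({(0 : V)}ᶜ : Set V) :=
    (isConnected_compl_singleton_of_one_lt_rank h1 0).isPreconnected
  -- G \ {0} is nonempty
  obtain ⟨x, hx⟩ := hne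
  have hGne : (({0} : Set V)ᶜ ∩ G).Nonempty := by
    rcases eq_or_ne x 0 with rfl | hx0
    · obtain ⟨ε, hε, hball⟩ := Metric.isOpen_iff.1 hopen 0 hx
      obtain ⟨y, hy0⟩ : ∃ y : V, y ≠ 0 := by
        by_contra h
        push_neg at h
        have : Module.rank ℝ V = 0 := by
          have : Subsingleton V := ⟨fun a b => by rw [h a, h b]⟩
          simp [rank_subsingleton']
        rw [this] at h1
        exact absurd h1 (by norm_num)
      have hny : (0:ℝ) < ‖y‖ := norm_pos_iff.2 hy0
      refine ⟨(ε / 2 / ‖y‖) • y, ?_, hball ?_⟩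
      · simp only [Set.mem_compl_iff, Set.mem_singleton_iff, smul_eq_zero, not_or]
        constructor
        · positivity
        · exact hy0
      · simp only [Metric.mem_ball, dist_zero_right, norm_smul, Real.norm_eq_abs]
        rw [abs_of_pos (by positivity), div_mul_cancel₀]
        · linarith
        · simpa using hy0
    · exact ⟨x, hx0, hx⟩
  -- {0}ᶜ ⊆ G ∪ (closure G)ᶜ
  have hsub : ({0} : Set V)ᶜ ⊆ G ∪ (closure G)ᶜ := by
    intro y hy
    by_cases hyc : y ∈ closure G
    · rcases hcl hyc with h | h
      · exact Or.inl h
      · exact absurd h hy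
    · exact Or.inr hyc
  have hdisj : Disjoint G (closure G)ᶜ :=
    Set.disjoint_left.2 fun y hy1 hy2 => hy2 (subset_closure hy1)
  have hGall : ({0} : Set V)ᶜ ⊆ G :=
    hconn.subset_left_of_subset_union hopen (isClosed_closure.isOpen_compl) hdisj hsub hGne
  -- 0 ∈ G by convexity: take x ≠ 0, then x, -x ∈ G, midpoint is 0
  obtain ⟨z, hz0, _⟩ := hGne
  have hz : z ∈ G := hGall hz0
  have hz' : -z ∈ G := hGall (by simpa using hz0)
  have h0 : (0 : V) ∈ G := by
    have := hconv hz hz' (by norm_num : (0:ℝ) ≤ 1/2) (by norm_num : (0:ℝ) ≤ 1/2) (by norm_num)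
    simpa [smul_neg, ← sub_eq_add_neg] using this
  ext y
  simp only [Set.mem_univ, iff_true]
  rcases eq_or_ne y 0 with rfl | hy
  · exact h0
  · exact hGall hy
end

section
/- Let R be an associative unital ring, D, I ∈ R with bracket [x,y] = xy − yx, and suppose I^{n+1} = 0 for some n (so e^{I} := Σ_{k=0}^{n} I^k/k! makes sense in a ℚ-algebra R). Assume C := −[[D, I], I] commutes with I. Then D·e^{I} − e^{I}·D = e^{I}·[D, I] − e^{I}·(½·C). -/
open Finset

lemma bracket_pow_aux {R : Type*} [Ring R] [Algebra ℚ R] (D I B C : R)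
    (hB : B = D * I - I * D) (hBI : B * I = I * B - C) (hCI : C * I = I * C) :
    ∀ k : ℕ, D * I ^ (k + 2) - I ^ (k + 2) * D =
      ((k : ℚ) + 2) • (I ^ (k + 1) * B) -
      ((((k : ℚ) + 2) * ((k : ℚ) + 1)) / 2) • (I ^ k * C) := by
  intro k
  induction k with
  | zero =>
      have h1 : D * I ^ (0 + 2) - I ^ (0 + 2) * D = B * I + I * B := by
        rw [hB]; noncomm_ring
      rw [h1, hBI]
      simp only [zero_add, pow_one, pow_zero, one_mul, Nat.cast_zero]
      match_scalars <;> ring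
  | succ k ih =>
      have h1 : D * I ^ (k + 1 + 2) - I ^ (k + 1 + 2) * D =
          (D * I ^ (k + 2) - I ^ (k + 2) * D) * I + I ^ (k + 2) * B := by
        rw [hB]; noncomm_ring
      rw [h1, ih, sub_mul, smul_mul_assoc, smul_mul_assoc, mul_assoc, mul_assoc, hBI, hCI]
      have h2 : I ^ (k + 1) * (I * B - C) = I ^ (k + 2) * B - I ^ (k + 1) * C := by
        rw [mul_sub]
        rw [show I ^ (k+1) * (I * B) = I ^ (k+2) * B by rw [← mul_assoc, ← pow_succ]]
      have h3 : I ^ k * (I * C) = I ^ (k + 1) * C := by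
        rw [← mul_assoc, ← pow_succ]
      rw [h2, h3]
      push_cast
      match_scalars <;> ring


/-- The bracket identity `[D, e^{I}] = e^{I}·[D,I] − e^{I}·(½C)` where
`C = −[[D,I],I]` commutes with `I` and `I` is nilpotent. -/
theorem bracket_exp_formula {R : Type*} [Ring R] [Algebra ℚ R] (D I : R) (n : ℕ)
    (hI : I ^ (n + 1) = 0)
    (hC : (-((D * I - I * D) * I - I * (D * I - I * D))) * I =
          I * (-((D * I - I * D) * I - I * (D * I - I * D)))) :
    D * (∑ k ∈ range (n + 1), ((k.factorial : ℚ)⁻¹) • I ^ k) -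
        (∑ k ∈ range (n + 1), ((k.factorial : ℚ)⁻¹) • I ^ k) * D =
      (∑ k ∈ range (n + 1), ((k.factorial : ℚ)⁻¹) • I ^ k) * (D * I - I * D) -
        (∑ k ∈ range (n + 1), ((k.factorial : ℚ)⁻¹) • I ^ k) *
          (((1 : ℚ) / 2) • (-((D * I - I * D) * I - I * (D * I - I * D)))) := by
  set B := D * I - I * D with hB
  set C := -((D * I - I * D) * I - I * (D * I - I * D)) with hCdef
  have hBI : B * I = I * B - C := by rw [hB, hCdef]; noncomm_ring
  have hCI : C * I = I * C := hC
  have hzero : ∀ k, n + 1 ≤ k → I ^ k = 0 := by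
    intro k hk
    obtain ⟨m, rfl⟩ := Nat.exists_eq_add_of_le hk
    rw [pow_add, hI, zero_mul]
  have hsum : ∑ k ∈ range (n + 1), ((k.factorial : ℚ)⁻¹) • I ^ k =
      ∑ k ∈ range (n + 3), ((k.factorial : ℚ)⁻¹) • I ^ k := by
    apply Finset.sum_subset (Finset.range_subset_range.mpr (by omega))
    intro x hx hnx
    have hx' : n + 1 ≤ x := by
      simp only [Finset.mem_range] at hx hnx; omega
    rw [hzero x hx', smul_zero]
  rw [hsum]
  have hL : D * (∑ k ∈ range (n + 3), ((k.factorial : ℚ)⁻¹) • I ^ k) -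
      (∑ k ∈ range (n + 3), ((k.factorial : ℚ)⁻¹) • I ^ k) * D =
      ∑ k ∈ range (n + 3), ((k.factorial : ℚ)⁻¹) • (D * I ^ k - I ^ k * D) := by
    rw [Finset.mul_sum, Finset.sum_mul, ← Finset.sum_sub_distrib]
    exact Finset.sum_congr rfl fun k _ => by
      rw [mul_smul_comm, smul_mul_assoc, smul_sub]
  have hR1 : (∑ k ∈ range (n + 3), ((k.factorial : ℚ)⁻¹) • I ^ k) * B =
      ∑ k ∈ range (n + 3), ((k.factorial : ℚ)⁻¹) • (I ^ k * B) := by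
    rw [Finset.sum_mul]
    exact Finset.sum_congr rfl fun k _ => by rw [smul_mul_assoc]
  have hR2 : (∑ k ∈ range (n + 3), ((k.factorial : ℚ)⁻¹) • I ^ k) * (((1:ℚ)/2) • C) =
      ∑ k ∈ range (n + 3), (((k.factorial : ℚ)⁻¹) * ((1:ℚ)/2)) • (I ^ k * C) := by
    rw [Finset.sum_mul]
    exact Finset.sum_congr rfl fun k _ => by
      rw [smul_mul_assoc, mul_smul_comm, smul_smul]
  rw [hL, hR1, hR2]
  -- peel the right-hand sums
  have hRB : ∑ k ∈ range (n + 3), ((k.factorial : ℚ)⁻¹) • (I ^ k * B) =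
      (∑ k ∈ range (n + 1), (((k+1).factorial : ℚ)⁻¹) • (I ^ (k+1) * B)) + B := by
    rw [Finset.sum_range_succ, hzero (n + 2) (by omega)]
    rw [Finset.sum_range_succ']
    simp
  have hRC : ∑ k ∈ range (n + 3), (((k.factorial : ℚ)⁻¹) * ((1:ℚ)/2)) • (I ^ k * C) =
      ∑ k ∈ range (n + 1), (((k.factorial : ℚ)⁻¹) * ((1:ℚ)/2)) • (I ^ k * C) := by
    rw [Finset.sum_range_succ, Finset.sum_range_succ,
        hzero (n + 2) (by omega), hzero (n + 1) (by omega)]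
    simp
  -- peel the left-hand sum
  have hLL : ∑ k ∈ range (n + 3), ((k.factorial : ℚ)⁻¹) • (D * I ^ k - I ^ k * D) =
      (∑ k ∈ range (n + 1),
        (((k+2).factorial : ℚ)⁻¹) • (D * I ^ (k+2) - I ^ (k+2) * D)) + B := by
    rw [Finset.sum_range_succ', Finset.sum_range_succ']
    simp [hB]
  rw [hRB, hRC, hLL]
  have hterm : ∀ k : ℕ,
      (((k+2).factorial : ℚ)⁻¹) • (D * I ^ (k+2) - I ^ (k+2) * D) =
      (((k+1).factorial : ℚ)⁻¹) • (I ^ (k+1) * B) -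
        (((k.factorial : ℚ)⁻¹) * ((1:ℚ)/2)) • (I ^ k * C) := by
    intro k
    rw [bracket_pow_aux D I B C hB hBI hCI k, smul_sub, smul_smul, smul_smul]
    congr 1
    · congr 1
      have h1 : ((k+2).factorial : ℚ) = ((k:ℚ)+2) * ((k+1).factorial : ℚ) := by
        rw [Nat.factorial_succ]; push_cast; ring
      have h2 : ((k+1).factorial : ℚ) ≠ 0 := Nat.cast_ne_zero.mpr (Nat.factorial_ne_zero _)
      rw [h1]
      field_simp
    · congr 1
      have h1 : ((k+2).factorial : ℚ) =
          ((k:ℚ)+2) * ((k:ℚ)+1) * (k.factorial : ℚ) := by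
        rw [Nat.factorial_succ, Nat.factorial_succ]; push_cast; ring
      have h2 : (k.factorial : ℚ) ≠ 0 := Nat.cast_ne_zero.mpr (Nat.factorial_ne_zero _)
      rw [h1]
      field_simp
  calc (∑ k ∈ range (n + 1),
        (((k+2).factorial : ℚ)⁻¹) • (D * I ^ (k+2) - I ^ (k+2) * D)) + B
      = (∑ k ∈ range (n + 1), ((((k+1).factorial : ℚ)⁻¹) • (I ^ (k+1) * B) -
          (((k.factorial : ℚ)⁻¹) * ((1:ℚ)/2)) • (I ^ k * C))) + B := by
        rw [Finset.sum_congr rfl fun k _ => hterm k]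
    _ = _ := by
        rw [Finset.sum_sub_distrib]
        abel
end
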